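/- arXiv:1205.6741 — 3 statements merged into one kernel-verified Lean document; each statement's English description precedes it below -/
import Mathlib

section
/- Let γ ∈ (0,1) and ξ ∈ (0,∞). Let K : [0,∞) → ℝ be Lipschitz continuous, bounded and nonnegative. For each T ∈ ℕ, T ≥ 1, let h = h_T > 0 satisfy |T/h − ξ| ≤ C₀/T for a constant C₀ not depending on T. Define N_T(w) = T^{-1} ∑_{j=⌊Tγ⌋}^{⌊Tw⌋−1} K((⌊Tw⌋ − j)/h) and N(w) = ∫_γ^w K(ξ(w−z)) dz for w ∈ [γ,1]. Then there exists a constant C (depending only on K, ξ, γ and C₀) such that for all T ≥ 1, sup_{w ∈ [γ,1]} |N_T(w) − N(w)| ≤ C/T. -/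
open MeasureTheory

set_option maxHeartbeats 1000000 in
/-- Uniform convergence at rate `1/T` of the Riemann-sum normalizer
`N_T(w) = T⁻¹ ∑_{j=⌊Tγ⌋}^{⌊Tw⌋-1} K((⌊Tw⌋ - j)/h)` of the kernel prediction smoother to its
continuum limit `N(w) = ∫_γ^w K(ξ(w-z)) dz`, for a Lipschitz, bounded, nonnegative kernel `K`
and a bandwidth `h = h_T` with `|T/h - ξ| ≤ C₀/T`. -/
theorem stmt_2
    (γ ξ : ℝ) (hγ : γ ∈ Set.Ioo (0:ℝ) 1) (hξ : 0 < ξ)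
    (K : ℝ → ℝ) (L : NNReal) (hKLip : LipschitzOnWith L K (Set.Ici 0))
    (MK : ℝ) (hKbd : ∀ x ≥ (0:ℝ), |K x| ≤ MK)
    (hKnn : ∀ x ≥ (0:ℝ), 0 ≤ K x)
    (h : ℕ → ℝ) (hhpos : ∀ T : ℕ, 1 ≤ T → 0 < h T)
    (C₀ : ℝ) (hrate : ∀ T : ℕ, 1 ≤ T → |(T : ℝ) / h T - ξ| ≤ C₀ / T) :
    ∃ C : ℝ, ∀ T : ℕ, 1 ≤ T → ∀ w ∈ Set.Icc γ 1,
      |(∑ j ∈ Finset.Ico ⌊(T : ℝ) * γ⌋₊ ⌊(T : ℝ) * w⌋₊,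
          K (((⌊(T : ℝ) * w⌋₊ : ℝ) - (j : ℝ)) / h T)) / T
        - ∫ z in γ..w, K (ξ * (w - z))| ≤ C / T := by
  classical
  have hC0 : 0 ≤ C₀ := by
    have h1 := hrate 1 le_rfl
    have h0 : (0:ℝ) ≤ C₀ / 1 := le_trans (abs_nonneg _) (by simpa using h1)
    simpa using h0
  have hMK : 0 ≤ MK := le_trans (abs_nonneg _) (hKbd 0 le_rfl)
  refine ⟨(L : ℝ) * (ξ + C₀) + 2 * MK, ?_⟩
  intro T hT w hw
  set t : ℝ := (T : ℝ) with hts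
  have ht1 : (1:ℝ) ≤ t := by rw [hts]; exact_mod_cast hT
  have htpos : (0:ℝ) < t := lt_of_lt_of_le one_pos ht1
  obtain ⟨hγ0, hγ1⟩ := hγ
  obtain ⟨hwγ, hw1⟩ := hw
  have hw0 : 0 < w := lt_of_lt_of_le hγ0 hwγ
  have hposh : 0 < h T := hhpos T hT
  have hrt : |t / h T - ξ| ≤ C₀ / t := by rw [hts]; exact hrate T hT
  set a := ⌊t * γ⌋₊ with ha
  set i := ⌊t * w⌋₊ with hi
  have hai : a ≤ i := Nat.floor_le_floor (by nlinarith)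
  have hale : (a:ℝ) ≤ t * γ := Nat.floor_le (by positivity)
  have hilt : t * w < i + 1 := Nat.lt_floor_add_one _
  have halt : t * γ < a + 1 := Nat.lt_floor_add_one _
  have hile : (i:ℝ) ≤ t * w := Nat.floor_le (by positivity)
  set n := i - a with hn
  have hin : a + n = i := Nat.add_sub_cancel' hai
  set u : ℕ → ℝ := fun k => ((a + k : ℕ) : ℝ)/t with hu
  have hu' : ∀ k, u k = ((a + k : ℕ) : ℝ)/t := fun _ => rfl
  set f : ℝ → ℝ := fun z => K (ξ * (w - z)) with hf
  have hf' : ∀ z, f z = K (ξ * (w - z)) := fun _ => rfl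
  clear_value t a i n u f
  clear hts ha hi hu hf
  have hiT : (i:ℝ) ≤ t := le_trans hile (by nlinarith)
  -- continuity of f on Iic w
  have hfc : ContinuousOn f (Set.Iic w) := by
    have hKc : ContinuousOn K (Set.Ici 0) := hKLip.continuousOn
    have hg : ContinuousOn (fun z : ℝ => ξ * (w - z)) (Set.Iic w) := by fun_prop
    have : ContinuousOn (K ∘ fun z : ℝ => ξ * (w - z)) (Set.Iic w) :=
      hKc.comp hg (fun z hz => by
        simp only [Set.mem_Iic] at hz
        exact Set.mem_Ici.2 (by nlinarith))
    refine this.congr (fun z _ => ?_)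
    rw [hf']; rfl
  have hint : ∀ x y, x ≤ w → y ≤ w → IntervalIntegrable f volume x y := by
    intro x y hx hy
    refine (hfc.mono ?_).intervalIntegrable
    intro z hz
    rcases Set.mem_uIcc.mp hz with h' | h'
    · exact Set.mem_Iic.2 (le_trans h'.2 hy)
    · exact Set.mem_Iic.2 (le_trans h'.2 hx)
  have haw : (a:ℝ)/t ≤ γ := by rw [div_le_iff₀ htpos]; nlinarith
  have hiw : (i:ℝ)/t ≤ w := by rw [div_le_iff₀ htpos]; nlinarith
  have hwi1 : w < ((i:ℝ)+1)/t := by rw [lt_div_iff₀ htpos]; nlinarith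
  have hγa1 : γ < ((a:ℝ)+1)/t := by rw [lt_div_iff₀ htpos]; nlinarith
  have haiw : (a:ℝ)/t ≤ w := le_trans haw hwγ
  have hule : ∀ k, k ≤ n → u k ≤ w := by
    intro k hk
    have hle : ((a + k : ℕ) : ℝ) ≤ (i : ℝ) := by
      have : a + k ≤ i := by omega
      exact_mod_cast this
    calc u k = ((a + k : ℕ) : ℝ)/t := hu' k
      _ ≤ (i:ℝ)/t := (div_le_div_iff_of_pos_right htpos).mpr hle
      _ ≤ w := hiw
  have huint : ∀ k < n, IntervalIntegrable f volume (u k) (u (k+1)) := by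
    intro k hk
    exact hint _ _ (hule k hk.le) (hule (k+1) hk)
  have hadj : ∑ k ∈ Finset.range n, ∫ z in u k..u (k+1), f z
      = ∫ z in (a:ℝ)/t..(i:ℝ)/t, f z := by
    have h0 : u 0 = (a:ℝ)/t := by rw [hu' 0]; norm_num
    have hN : u n = (i:ℝ)/t := by rw [hu' n, hin]
    rw [← h0, ← hN]
    exact intervalIntegral.sum_integral_adjacent_intervals huint
  have hsplit1 : (∫ z in (a:ℝ)/t..γ, f z) + ∫ z in γ..w, f z = ∫ z in (a:ℝ)/t..w, f z :=
    intervalIntegral.integral_add_adjacent_intervals (hint _ _ haiw hwγ) (hint _ _ hwγ le_rfl)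
  have hsplit2 : (∫ z in (a:ℝ)/t..(i:ℝ)/t, f z) + ∫ z in (i:ℝ)/t..w, f z
      = ∫ z in (a:ℝ)/t..w, f z :=
    intervalIntegral.integral_add_adjacent_intervals (hint _ _ haiw hiw) (hint _ _ hiw le_rfl)
  have hsum : (∑ j ∈ Finset.Ico a i, K (((i:ℝ) - (j:ℝ)) / h T)) / t
      = ∑ k ∈ Finset.range n, K (((i:ℝ) - ((a + k : ℕ):ℝ)) / h T) / t := by
    rw [Finset.sum_Ico_eq_sum_range, Finset.sum_div, hn]
  -- per-term bound
  have hterm : ∀ k ∈ Finset.range n,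
      |K (((i:ℝ) - ((a + k : ℕ):ℝ)) / h T) / t - ∫ z in u k..u (k+1), f z|
        ≤ (L : ℝ) * (ξ + C₀) / t^2 := by
    intro k hk
    rw [Finset.mem_range] at hk
    set j := a + k with hj
    set d : ℝ := (i:ℝ) - (j:ℝ) with hd
    clear_value j d
    have hji : j < i := by omega
    have hd1 : (1:ℝ) ≤ d := by
      have : (j:ℝ) + 1 ≤ (i:ℝ) := by exact_mod_cast hji
      rw [hd]; linarith
    have hd2 : d ≤ t := by
      have h0 : (0:ℝ) ≤ (j:ℝ) := Nat.cast_nonneg _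
      rw [hd]; linarith
    have huk : u k = (j:ℝ)/t := by rw [hu' k, hj]
    have huk1 : u (k+1) = ((j:ℝ)+1)/t := by
      rw [hu' (k+1), show a + (k+1) = j + 1 from by omega]
      push_cast; ring
    have hlen : u (k+1) - u k = 1/t := by rw [huk, huk1]; ring
    have hconst : K (d / h T) / t = ∫ z in u k..u (k+1), K (d / h T) := by
      rw [intervalIntegral.integral_const, hlen, smul_eq_mul]; ring
    have hker : K (d / h T) / t - (∫ z in u k..u (k+1), f z)
        = ∫ z in u k..u (k+1), (K (d / h T) - f z) := by
      rw [hconst, ← intervalIntegral.integral_sub intervalIntegrable_const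
        (hint _ _ (hule k hk.le) (hule (k+1) hk))]
    rw [hker]
    have hb : ∀ z ∈ Set.uIoc (u k) (u (k+1)), ‖K (d / h T) - f z‖ ≤ (L : ℝ) * (ξ + C₀) / t := by
      intro z hz
      have huu : u k ≤ u (k+1) := by
        rw [huk, huk1]; exact (div_le_div_iff_of_pos_right htpos).mpr (by linarith)
      rw [Set.uIoc_of_le huu] at hz
      obtain ⟨hz1, hz2⟩ := hz
      rw [huk] at hz1
      rw [huk1] at hz2
      have hz1' : (j:ℝ) < t * z := by rw [div_lt_iff₀ htpos] at hz1; linarith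
      have hz2' : t * z ≤ (j:ℝ) + 1 := by rw [le_div_iff₀ htpos] at hz2; linarith
      have hzw : z ≤ w := le_trans hz2 (le_trans ((div_le_div_iff_of_pos_right htpos).mpr (by
        have : (j:ℝ) + 1 ≤ (i:ℝ) := by exact_mod_cast hji
        linarith)) hiw)
      have hx1 : (0:ℝ) ≤ ξ * (w - z) := mul_nonneg hξ.le (by linarith)
      have hx2 : (0:ℝ) ≤ d / h T := div_nonneg (by linarith) hposh.le
      have hdist := hKLip.dist_le_mul _ (Set.mem_Ici.2 hx2) _ (Set.mem_Ici.2 hx1)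
      rw [Real.dist_eq, Real.dist_eq] at hdist
      have key : |d - t * (w - z)| ≤ 1 := by
        have hexp : d - t * (w - z) = d - t * w + t * z := by ring
        rw [abs_le, hexp]
        constructor
        · linarith [hd, hilt, hz1']
        · linarith [hd, hile, hz2']
      have harg : |d / h T - ξ * (w - z)| ≤ (ξ + C₀) / t := by
        have hrw : d / h T - ξ * (w - z)
            = (d * (t / h T - ξ) + ξ * (d - t * (w - z))) / t := by
          field_simp
          ring
        rw [hrw, abs_div, abs_of_pos htpos]
        apply (div_le_div_iff_of_pos_right htpos).mpr
        have h1 : |d * (t / h T - ξ)| ≤ C₀ := by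
          rw [abs_mul, abs_of_nonneg (by linarith : (0:ℝ) ≤ d)]
          calc d * |t / h T - ξ| ≤ t * (C₀ / t) :=
              mul_le_mul hd2 hrt (abs_nonneg _) (le_of_lt htpos)
            _ = C₀ := by field_simp
        have h2 : |ξ * (d - t * (w - z))| ≤ ξ := by
          rw [abs_mul, abs_of_pos hξ]
          calc ξ * |d - t * (w - z)| ≤ ξ * 1 := mul_le_mul_of_nonneg_left key hξ.le
            _ = ξ := mul_one ξ
        calc |d * (t / h T - ξ) + ξ * (d - t * (w - z))|
            ≤ |d * (t / h T - ξ)| + |ξ * (d - t * (w - z))| := abs_add_le _ _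
          _ ≤ C₀ + ξ := add_le_add h1 h2
          _ = ξ + C₀ := by ring
      calc ‖K (d / h T) - f z‖ = |K (d / h T) - K (ξ * (w - z))| := by
            rw [hf' z, Real.norm_eq_abs]
        _ ≤ (L : ℝ) * |d / h T - ξ * (w - z)| := hdist
        _ ≤ (L : ℝ) * ((ξ + C₀) / t) :=
            mul_le_mul_of_nonneg_left harg (NNReal.coe_nonneg L)
        _ = (L : ℝ) * (ξ + C₀) / t := by ring
    calc |∫ z in u k..u (k+1), (K (d / h T) - f z)|
        ≤ ((L : ℝ) * (ξ + C₀) / t) * |u (k+1) - u k| :=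
          intervalIntegral.norm_integral_le_of_norm_le_const hb
      _ = (L : ℝ) * (ξ + C₀) / t^2 := by
          rw [hlen, abs_of_pos (by positivity : (0:ℝ) < 1/t)]
          ring
  -- sum bound
  have hnle : (n:ℝ) ≤ t := by
    have h1 : n ≤ i := by omega
    have : (n:ℝ) ≤ (i:ℝ) := by exact_mod_cast h1
    linarith
  have hsumbd : |∑ k ∈ Finset.range n,
        (K (((i:ℝ) - ((a + k : ℕ):ℝ)) / h T) / t - ∫ z in u k..u (k+1), f z)|
      ≤ (L : ℝ) * (ξ + C₀) / t := by
    calc |∑ k ∈ Finset.range n, (K (((i:ℝ) - ((a + k : ℕ):ℝ)) / h T) / t - ∫ z in u k..u (k+1), f z)|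
        ≤ ∑ k ∈ Finset.range n, |K (((i:ℝ) - ((a + k : ℕ):ℝ)) / h T) / t - ∫ z in u k..u (k+1), f z| :=
          Finset.abs_sum_le_sum_abs _ _
      _ ≤ ∑ _k ∈ Finset.range n, (L : ℝ) * (ξ + C₀) / t^2 := Finset.sum_le_sum hterm
      _ = (n:ℝ) * ((L : ℝ) * (ξ + C₀) / t^2) := by rw [Finset.sum_const, Finset.card_range]; ring
      _ ≤ t * ((L : ℝ) * (ξ + C₀) / t^2) := by
          apply mul_le_mul_of_nonneg_right hnle
          positivity
      _ = (L : ℝ) * (ξ + C₀) / t := by field_simp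
  -- edge bounds
  have hedge1 : |∫ z in (i:ℝ)/t..w, f z| ≤ MK / t := by
    have hb : ∀ z ∈ Set.uIoc ((i:ℝ)/t) w, ‖f z‖ ≤ MK := by
      intro z hz
      rw [Set.uIoc_of_le hiw] at hz
      rw [hf' z, Real.norm_eq_abs]
      exact hKbd _ (mul_nonneg hξ.le (by linarith [hz.2]))
    calc |∫ z in (i:ℝ)/t..w, f z| ≤ MK * |w - (i:ℝ)/t| :=
        intervalIntegral.norm_integral_le_of_norm_le_const hb
      _ ≤ MK * (1/t) := by
          apply mul_le_mul_of_nonneg_left _ hMK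
          rw [abs_of_nonneg (by linarith)]
          have : w - (i:ℝ)/t < 1/t := by
            have h2 := hwi1
            rw [add_div] at h2
            linarith
          linarith
      _ = MK / t := by ring
  have hedge2 : |∫ z in (a:ℝ)/t..γ, f z| ≤ MK / t := by
    have hb : ∀ z ∈ Set.uIoc ((a:ℝ)/t) γ, ‖f z‖ ≤ MK := by
      intro z hz
      rw [Set.uIoc_of_le haw] at hz
      rw [hf' z, Real.norm_eq_abs]
      exact hKbd _ (mul_nonneg hξ.le (by linarith [le_trans hz.2 hwγ]))
    calc |∫ z in (a:ℝ)/t..γ, f z| ≤ MK * |γ - (a:ℝ)/t| :=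
        intervalIntegral.norm_integral_le_of_norm_le_const hb
      _ ≤ MK * (1/t) := by
          apply mul_le_mul_of_nonneg_left _ hMK
          rw [abs_of_nonneg (by linarith)]
          have : γ - (a:ℝ)/t < 1/t := by
            have h2 := hγa1
            rw [add_div] at h2
            linarith
          linarith
      _ = MK / t := by ring
  -- put everything together
  have hS : (∑ j ∈ Finset.Ico a i, K (((i:ℝ) - (j:ℝ)) / h T)) / t
      - (∫ z in (a:ℝ)/t..(i:ℝ)/t, f z)
      = ∑ k ∈ Finset.range n,
        (K (((i:ℝ) - ((a + k : ℕ):ℝ)) / h T) / t - ∫ z in u k..u (k+1), f z) := by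
    rw [Finset.sum_sub_distrib, ← hsum, hadj]
  have hfinal : (∑ j ∈ Finset.Ico a i, K (((i:ℝ) - (j:ℝ)) / h T)) / t
      - (∫ z in γ..w, f z)
      = (∑ k ∈ Finset.range n,
          (K (((i:ℝ) - ((a + k : ℕ):ℝ)) / h T) / t - ∫ z in u k..u (k+1), f z))
        - (∫ z in (i:ℝ)/t..w, f z) + (∫ z in (a:ℝ)/t..γ, f z) := by
    rw [← hS]; linarith [hsplit1, hsplit2]
  calc |(∑ j ∈ Finset.Ico a i, K (((i:ℝ) - (j:ℝ)) / h T)) / t - ∫ z in γ..w, f z|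
      = |(∑ k ∈ Finset.range n,
          (K (((i:ℝ) - ((a + k : ℕ):ℝ)) / h T) / t - ∫ z in u k..u (k+1), f z))
        - (∫ z in (i:ℝ)/t..w, f z) + (∫ z in (a:ℝ)/t..γ, f z)| := by rw [hfinal]
    _ ≤ |(∑ k ∈ Finset.range n,
          (K (((i:ℝ) - ((a + k : ℕ):ℝ)) / h T) / t - ∫ z in u k..u (k+1), f z))
        - (∫ z in (i:ℝ)/t..w, f z)| + |∫ z in (a:ℝ)/t..γ, f z| := abs_add_le _ _
    _ ≤ (|∑ k ∈ Finset.range n,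
          (K (((i:ℝ) - ((a + k : ℕ):ℝ)) / h T) / t - ∫ z in u k..u (k+1), f z)|
        + |∫ z in (i:ℝ)/t..w, f z|) + |∫ z in (a:ℝ)/t..γ, f z| := by
        gcongr
        exact abs_sub _ _
    _ ≤ ((L : ℝ) * (ξ + C₀) / t + MK / t) + MK / t := by
        gcongr
    _ = ((L : ℝ) * (ξ + C₀) + 2 * MK) / t := by ring
end

section
/- In the setting of the previous statement (K Lipschitz, bounded, strictly positive; h = h_T with |T/h − ξ| ≤ C₀/T; D(u,v,w) = K(w−u)K(w−v)·1{0 ≤ u,v ≤ w}; N_T(w) = T^{-1} ∑_{j=⌊Tγ⌋}^{⌊Tw⌋−1} K((⌊Tw⌋−j)/h); g_T^{v,s}(u) = ∫_{⌊Ts₀⌋/T}^{⌊Ts⌋/T} D(uT/h, vT/h, ⌊Tw⌋/h) N_T(w)^{-2} dw), assume additionally that there is c > 0 with N_T(w) ≥ c for all w ∈ [s₀,1] and all sufficiently large T. Then the total variations of the functions u ↦ g_T^{v,s}(u) on [γ,1] are uniformly bounded: sup_{s ∈ [s₀,1]} sup_{v ∈ [γ,1]} sup_{T} V(g_T^{v,s};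 [γ,1]) < ∞, where V(f;[γ,1]) = sup over partitions γ = ξ_0 < ξ_1 < ⋯ < ξ_m = 1 of ∑_i |f(ξ_{i+1}) − f(ξ_i)|. -/
open MeasureTheory

set_option maxHeartbeats 1000000

section AuxBV

open Set

lemma aux_bv
    (γ : ℝ)
    (a b : ℝ) (hab : a ≤ b) (hba : b - a ≤ 1)
    (F : ℝ → ℝ → ℝ) (θ : ℝ → ℝ) (hθ : Measurable θ)
    (hFm : ∀ u, Measurable (F u))
    (Λ M : ℝ) (hΛ : 0 ≤ Λ) (hM : 0 ≤ M)
    (hbd : ∀ u ∈ Set.Icc γ 1, ∀ w ∈ Set.Ioc a b, |F u w| ≤ M)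
    (hptw : ∀ x y, γ ≤ x → x ≤ y → y ≤ 1 → ∀ w ∈ Set.Ioc a b,
      |F y w - F x w| ≤ Λ * (y - x) + (Set.Ico x y).indicator (fun _ => M) (θ w)) :
    eVariationOn (fun u => ∫ w in a..b, F u w) (Set.Icc γ 1)
      ≤ ENNReal.ofReal (Λ * (1 - γ) + M) := by
  have hIm : MeasurableSet (Set.Ioc a b) := measurableSet_Ioc
  have hvol : volume (Set.Ioc a b) ≠ ⊤ := by
    simp [Real.volume_Ioc]
  have hvolR : (volume (Set.Ioc a b)).toReal = b - a := by
    rw [Real.volume_Ioc, ENNReal.toReal_ofReal (by linarith)]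
  have hint : ∀ u ∈ Set.Icc γ 1, IntegrableOn (F u) (Set.Ioc a b) := by
    intro u hu
    exact Measure.integrableOn_of_bounded hvol
      ((hFm u).aestronglyMeasurable)
      (by
        filter_upwards [ae_restrict_mem hIm] with w hw
        simpa [Real.norm_eq_abs] using hbd u hu w hw)
  -- main pairwise estimate
  have key : ∀ x y, x ∈ Set.Icc γ 1 → y ∈ Set.Icc γ 1 → x ≤ y →
      |(∫ w in a..b, F y w) - ∫ w in a..b, F x w|
        ≤ Λ * (y - x) + M * (volume (Set.Ioc a b ∩ θ ⁻¹' Set.Ico x y)).toReal := by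
    intro x y hx hy hxy
    have hSm : MeasurableSet (θ ⁻¹' Set.Ico x y) := hθ measurableSet_Ico
    have hix := hint x hx
    have hiy := hint y hy
    rw [intervalIntegral.integral_of_le hab, intervalIntegral.integral_of_le hab,
      ← integral_sub hiy hix]
    have h1 : |∫ w in Set.Ioc a b, (F y w - F x w)|
        ≤ ∫ w in Set.Ioc a b, |F y w - F x w| := by
      simpa [Real.norm_eq_abs] using
        norm_integral_le_integral_norm (μ := volume.restrict (Set.Ioc a b))
          (fun w => F y w - F x w)
    refine h1.trans ?_
    have hindeq : ∀ w, (Set.Ico x y).indicator (fun _ => M) (θ w)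
        = (θ ⁻¹' Set.Ico x y).indicator (fun _ => M) w := by
      intro w
      by_cases hw : θ w ∈ Set.Ico x y <;> simp [Set.indicator_apply, hw]
    have hconst : IntegrableOn (fun _ : ℝ => Λ * (y - x)) (Set.Ioc a b) :=
      integrableOn_const hvol
    have hindm : Measurable (fun w => (Set.Ico x y).indicator (fun _ => M) (θ w)) :=
      (measurable_const.indicator measurableSet_Ico).comp hθ
    have hind : IntegrableOn (fun w => (Set.Ico x y).indicator (fun _ => M) (θ w))
        (Set.Ioc a b) := by
      refine Measure.integrableOn_of_bounded (M := M) hvol hindm.aestronglyMeasurable ?_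
      refine ae_of_all _ fun w => ?_
      rw [Real.norm_eq_abs]
      by_cases hw : θ w ∈ Set.Ico x y <;>
        simp [Set.indicator_apply, hw, abs_of_nonneg hM, hM]
    have h2 : ∫ w in Set.Ioc a b, |F y w - F x w|
        ≤ ∫ w in Set.Ioc a b,
            (Λ * (y - x) + (Set.Ico x y).indicator (fun _ => M) (θ w)) := by
      refine setIntegral_mono_on ((hiy.sub hix).abs) (hconst.add hind) hIm ?_
      intro w hw
      exact hptw x y hx.1 hxy hy.2 w hw
    refine h2.trans ?_
    rw [integral_add hconst hind]
    have e1 : ∫ _ in Set.Ioc a b, Λ * (y - x) = (b - a) * (Λ * (y - x)) := by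
      rw [setIntegral_const, measureReal_def, hvolR, smul_eq_mul]
    have e2 : ∫ w in Set.Ioc a b, (Set.Ico x y).indicator (fun _ => M) (θ w)
        = M * (volume (Set.Ioc a b ∩ θ ⁻¹' Set.Ico x y)).toReal := by
      simp_rw [hindeq]
      rw [setIntegral_indicator hSm, setIntegral_const, smul_eq_mul, mul_comm, measureReal_def]
    rw [e1, e2]
    have : (b - a) * (Λ * (y - x)) ≤ Λ * (y - x) := by
      nlinarith [mul_nonneg hΛ (sub_nonneg.2 hxy)]
    linarith
  -- now sum over partitions
  rw [eVariationOn]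
  refine iSup_le ?_
  rintro ⟨n, ⟨u, hu, hus⟩⟩
  simp only [edist_dist, Real.dist_eq]
  rw [← ENNReal.ofReal_sum_of_nonneg (fun i _ => abs_nonneg _)]
  refine ENNReal.ofReal_le_ofReal ?_
  set S : ℕ → Set ℝ := fun i => Set.Ioc a b ∩ θ ⁻¹' Set.Ico (u i) (u (i + 1)) with hS
  have hsum1 : ∑ i ∈ Finset.range n, |(fun v => ∫ w in a..b, F v w) (u (i + 1))
      - (fun v => ∫ w in a..b, F v w) (u i)|
      ≤ ∑ i ∈ Finset.range n, (Λ * (u (i + 1) - u i) + M * (volume (S i)).toReal) :=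
    Finset.sum_le_sum fun i _ => key (u i) (u (i + 1)) (hus i) (hus (i + 1))
      (hu (Nat.le_succ i))
  refine hsum1.trans ?_
  rw [Finset.sum_add_distrib, ← Finset.mul_sum, ← Finset.mul_sum]
  have ht1 : ∑ i ∈ Finset.range n, (u (i + 1) - u i) ≤ 1 - γ := by
    rw [Finset.sum_range_sub u]
    have h0 := hus 0
    have hn := hus n
    simp only [Set.mem_Icc] at h0 hn
    linarith
  have ht2 : ∑ i ∈ Finset.range n, (volume (S i)).toReal ≤ 1 := by
    have hdisj : Set.PairwiseDisjoint (↑(Finset.range n)) S := by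
      intro i _ j _ hij
      refine Set.disjoint_left.2 fun w hwi hwj => ?_
      rcases lt_or_gt_of_ne hij with hlt | hlt
      · have : u (i + 1) ≤ u j := hu hlt
        have h1 := hwi.2
        have h2 := hwj.2
        simp only [Set.mem_preimage, Set.mem_Ico] at h1 h2
        linarith [h1.2, h2.1]
      · have : u (j + 1) ≤ u i := hu hlt
        have h1 := hwi.2
        have h2 := hwj.2
        simp only [Set.mem_preimage, Set.mem_Ico] at h1 h2
        linarith [h1.2, h2.1]
    have hSm : ∀ i ∈ Finset.range n, MeasurableSet (S i) := fun i _ =>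
      hIm.inter (hθ measurableSet_Ico)
    have hμ : ∑ i ∈ Finset.range n, volume (S i) ≤ volume (Set.Ioc a b) := by
      rw [← measure_biUnion_finset hdisj hSm]
      exact measure_mono (Set.iUnion₂_subset fun i _ => Set.inter_subset_left)
    have hfin : ∀ i ∈ Finset.range n, volume (S i) ≠ ⊤ := fun i _ =>
      (lt_of_le_of_lt (measure_mono Set.inter_subset_left) hvol.lt_top).ne
    calc ∑ i ∈ Finset.range n, (volume (S i)).toReal
        = (∑ i ∈ Finset.range n, volume (S i)).toReal := (ENNReal.toReal_sum hfin).symm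
      _ ≤ (volume (Set.Ioc a b)).toReal := ENNReal.toReal_mono hvol hμ
      _ = b - a := hvolR
      _ ≤ 1 := by linarith
  have hΛterm : Λ * ∑ i ∈ Finset.range n, (u (i + 1) - u i) ≤ Λ * (1 - γ) :=
    mul_le_mul_of_nonneg_left ht1 hΛ
  have hMterm : M * ∑ i ∈ Finset.range n, (volume (S i)).toReal ≤ M := by
    nlinarith [Finset.sum_nonneg (fun i (_ : i ∈ Finset.range n) =>
      ENNReal.toReal_nonneg (a := volume (S i)))]
  linarith

end AuxBV

/-- Uniformly bounded total variation of the functions `u ↦ g_T^{v,s}(u)` on `[γ,1]`, where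
`g_T^{v,s}(u) = ∫_{⌊Ts₀⌋/T}^{⌊Ts⌋/T} D(uT/h, vT/h, ⌊Tw⌋/h) N_T(w)⁻² dw` with
`D(u,v,w) = K(w-u)K(w-v) 1{0 ≤ u,v ≤ w}` built from a Lipschitz, bounded, strictly positive
kernel `K`, a bandwidth satisfying `|T/h - ξ| ≤ C₀/T`, and the normalizer
`N_T(w) = T⁻¹ ∑_{j=⌊Tγ⌋}^{⌊Tw⌋-1} K((⌊Tw⌋-j)/h)` assumed bounded below by `c > 0` on `[s₀,1]`
for all sufficiently large `T`. -/
theorem stmt_5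
    (γ s₀ ξ : ℝ) (hγ : γ ∈ Set.Ioo (0:ℝ) 1) (hs₀ : s₀ ∈ Set.Ioo γ 1) (hξ : 0 < ξ)
    (K : ℝ → ℝ) (L : NNReal) (hKLip : LipschitzOnWith L K (Set.Ici 0))
    (MK : ℝ) (hKbd : ∀ x ≥ (0:ℝ), |K x| ≤ MK) (hKpos : ∀ x ≥ (0:ℝ), 0 < K x)
    (h : ℕ → ℝ) (hhpos : ∀ T : ℕ, 1 ≤ T → 0 < h T)
    (C₀ : ℝ) (hrate : ∀ T : ℕ, 1 ≤ T → |(T : ℝ) / h T - ξ| ≤ C₀ / T)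
    (D : ℝ → ℝ → ℝ → ℝ)
    (hD : ∀ u v w, D u v w =
      if 0 ≤ u ∧ u ≤ w ∧ 0 ≤ v ∧ v ≤ w then K (w - u) * K (w - v) else 0)
    (NT : ℕ → ℝ → ℝ)
    (hNT : ∀ (T : ℕ) (w : ℝ), NT T w =
      (∑ j ∈ Finset.Ico ⌊(T : ℝ) * γ⌋₊ ⌊(T : ℝ) * w⌋₊,
        K (((⌊(T : ℝ) * w⌋₊ : ℝ) - (j : ℝ)) / h T)) / T)
    (gT : ℕ → ℝ → ℝ → ℝ → ℝ)
    (hgT : ∀ (T : ℕ) (v s u : ℝ), gT T v s u =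
      ∫ w in ((⌊(T : ℝ) * s₀⌋₊ : ℝ) / T)..((⌊(T : ℝ) * s⌋₊ : ℝ) / T),
        D (u * T / h T) (v * T / h T) ((⌊(T : ℝ) * w⌋₊ : ℝ) / h T) * (NT T w ^ 2)⁻¹)
    (c : ℝ) (hc : 0 < c)
    (T₀ : ℕ) (hNTc : ∀ T : ℕ, T₀ ≤ T → ∀ w ∈ Set.Icc s₀ 1, c ≤ NT T w) :
    ∃ B : ℝ, ∀ T : ℕ, ∀ v ∈ Set.Icc γ 1, ∀ s ∈ Set.Icc s₀ 1,
      eVariationOn (fun u => gT T v s u) (Set.Icc γ 1) ≤ ENNReal.ofReal B := by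
  obtain ⟨hγ0, hγ1⟩ := hγ
  obtain ⟨hs₀γ, hs₀1⟩ := hs₀
  have hMK0 : 0 ≤ MK := le_trans (abs_nonneg _) (hKbd 0 le_rfl)
  -- the finite-T correction constants
  set val : ℕ → ℕ → ℝ := fun T n =>
    (∑ j ∈ Finset.Ico ⌊(T : ℝ) * γ⌋₊ n, K (((n : ℝ) - (j : ℝ)) / h T)) / T with hval
  have hNTval : ∀ T w, NT T w = val T ⌊(T : ℝ) * w⌋₊ := fun T w => hNT T w
  set T₁ : ℕ := max T₀ 1 with hT₁
  set CT : ℕ → ℝ := fun T => ∑ n ∈ Finset.range (T + 1), ((val T n) ^ 2)⁻¹ with hCT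
  have hCT0 : ∀ T, 0 ≤ CT T := fun T =>
    Finset.sum_nonneg fun n _ => inv_nonneg.2 (sq_nonneg _)
  set Cmax : ℝ := (c ^ 2)⁻¹ + ∑ T ∈ Finset.range T₁, CT T with hCmax
  have hsumCT0 : 0 ≤ ∑ T ∈ Finset.range T₁, CT T :=
    Finset.sum_nonneg fun T _ => hCT0 T
  have hCmax0 : 0 ≤ Cmax := by positivity
  have hCmaxc : (c ^ 2)⁻¹ ≤ Cmax := by
    have := hsumCT0; rw [hCmax]; linarith
  have hCmaxT : ∀ T, T < T₁ → CT T ≤ Cmax := by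
    intro T hTlt
    have h1 : CT T ≤ ∑ T ∈ Finset.range T₁, CT T :=
      Finset.single_le_sum (fun i _ => hCT0 i) (Finset.mem_range.2 hTlt)
    have h2 : (0:ℝ) ≤ (c ^ 2)⁻¹ := by positivity
    rw [hCmax]; linarith
  -- uniform bound on (NT T w ^ 2)⁻¹
  have Hinv : ∀ T : ℕ, 1 ≤ T → ∀ w, ((⌊(T : ℝ) * s₀⌋₊ : ℝ) / T) < w → w ≤ 1 →
      ((NT T w) ^ 2)⁻¹ ≤ Cmax := by
    intro T hT w hwa hw1
    have hT0 : (0:ℝ) < T := by exact_mod_cast hT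
    have hw0 : 0 < w := lt_of_le_of_lt (by positivity) hwa
    by_cases hTT : T₁ ≤ T
    · have hc' : c ≤ NT T w := by
        by_cases hws : s₀ ≤ w
        · exact hNTc T (le_trans (le_max_left _ _) hTT) w ⟨hws, hw1⟩
        · push_neg at hws
          have hfl_le : ⌊(T : ℝ) * w⌋₊ ≤ ⌊(T : ℝ) * s₀⌋₊ :=
            Nat.floor_mono (mul_le_mul_of_nonneg_left hws.le hT0.le)
          have hfl_ge : ⌊(T : ℝ) * s₀⌋₊ ≤ ⌊(T : ℝ) * w⌋₊ := by
            apply Nat.le_floor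
            rw [div_lt_iff₀ hT0] at hwa
            calc ((⌊(T : ℝ) * s₀⌋₊ : ℝ)) ≤ w * (T : ℝ) := hwa.le
              _ = (T : ℝ) * w := mul_comm _ _
          have hfl : ⌊(T : ℝ) * w⌋₊ = ⌊(T : ℝ) * s₀⌋₊ := le_antisymm hfl_le hfl_ge
          have : NT T w = NT T s₀ := by rw [hNT, hNT, hfl]
          rw [this]
          exact hNTc T (le_trans (le_max_left _ _) hTT) s₀ ⟨le_rfl, le_of_lt hs₀1⟩
      have hsq : c ^ 2 ≤ (NT T w) ^ 2 := pow_le_pow_left₀ hc.le hc' 2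
      exact (inv_anti₀ (by positivity) hsq).trans hCmaxc
    · have hTlt : T < T₁ := lt_of_not_ge hTT
      rw [hNTval]
      have hmem : ⌊(T : ℝ) * w⌋₊ ∈ Finset.range (T + 1) := by
        rw [Finset.mem_range, Nat.lt_succ_iff]
        have hle : (T : ℝ) * w ≤ (T : ℝ) := mul_le_of_le_one_right hT0.le hw1
        calc ⌊(T : ℝ) * w⌋₊ ≤ ⌊((T : ℕ) : ℝ)⌋₊ := Nat.floor_mono hle
          _ = T := Nat.floor_natCast T
      exact (Finset.single_le_sum (fun n (_ : n ∈ Finset.range (T + 1)) =>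
        inv_nonneg.2 (sq_nonneg (val T n))) hmem).trans (hCmaxT T hTlt)
  -- the final bound
  refine ⟨Cmax * MK * ((L : ℝ) * (ξ + C₀) * (1 - γ) + MK), ?_⟩
  intro T v hv s hs
  obtain ⟨hsl, hsr⟩ := hs
  obtain ⟨hvl, hvr⟩ := hv
  by_cases hT : 1 ≤ T
  · -- main case T ≥ 1
    have hT0 : (0:ℝ) < T := by exact_mod_cast hT
    have hh := hhpos T hT
    set r : ℝ := (T : ℝ) / h T with hr
    have hr0 : 0 < r := by positivity
    have hC₀0 : 0 ≤ C₀ := by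
      have h1 := hrate T hT
      have h2 : (0:ℝ) ≤ C₀ / T := le_trans (abs_nonneg _) h1
      simpa using (le_div_iff₀ hT0).1 h2
    have hrle : r ≤ ξ + C₀ := by
      have h1 := hrate T hT
      have hT1R : (1:ℝ) ≤ (T : ℝ) := by exact_mod_cast hT
      have h2 : C₀ / (T : ℝ) ≤ C₀ := by
        rw [div_le_iff₀ hT0]
        calc C₀ = C₀ * 1 := (mul_one _).symm
          _ ≤ C₀ * (T : ℝ) := mul_le_mul_of_nonneg_left hT1R hC₀0
      have h3 := abs_le.1 h1
      rw [hr]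
      linarith only [h3.2, h2]
    obtain ⟨a, ha⟩ : ∃ a : ℝ, a = (⌊(T : ℝ) * s₀⌋₊ : ℝ) / T := ⟨_, rfl⟩
    obtain ⟨b, hb⟩ : ∃ b : ℝ, b = (⌊(T : ℝ) * s⌋₊ : ℝ) / T := ⟨_, rfl⟩
    have ha0 : 0 ≤ a := by rw [ha]; positivity
    have hab : a ≤ b := by
      rw [ha, hb]
      refine (div_le_div_iff_of_pos_right hT0).2 ?_
      exact_mod_cast Nat.floor_mono (mul_le_mul_of_nonneg_left hsl hT0.le)
    have hs0' : (0:ℝ) < s := lt_trans hγ0 (lt_of_lt_of_le hs₀γ hsl)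
    have hTs0 : (0:ℝ) ≤ (T : ℝ) * s := by positivity
    have hb1 : b ≤ 1 := by
      rw [hb, div_le_one hT0]
      have h1 : ((⌊(T : ℝ) * s⌋₊ : ℝ)) ≤ (T : ℝ) * s := Nat.floor_le hTs0
      exact h1.trans (mul_le_of_le_one_right hT0.le hsr)
    have hba : b - a ≤ 1 := by linarith only [ha0, hb1]
    obtain ⟨F, hF⟩ : ∃ F : ℝ → ℝ → ℝ, F = fun u w =>
        D (u * T / h T) (v * T / h T) ((⌊(T : ℝ) * w⌋₊ : ℝ) / h T) * (NT T w ^ 2)⁻¹ :=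
      ⟨_, rfl⟩
    obtain ⟨θ, hθdef⟩ : ∃ θ : ℝ → ℝ, θ = fun w => (⌊(T : ℝ) * w⌋₊ : ℝ) / T := ⟨_, rfl⟩
    have hgF : (fun u => gT T v s u) = fun u => ∫ w in a..b, F u w := by
      funext u
      rw [hgT, ha, hb, hF]
    have hfloorm : Measurable (fun w : ℝ => ⌊(T : ℝ) * w⌋₊) :=
      Nat.measurable_floor.comp (measurable_id.const_mul _)
    have hθm : Measurable θ := by
      rw [hθdef]
      exact (measurable_from_top (f := fun n : ℕ => (n : ℝ) / (T : ℝ))).comp hfloorm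
    have hFm : ∀ u, Measurable (F u) := by
      intro u
      have heq : F u = (fun n : ℕ =>
          D (u * T / h T) (v * T / h T) ((n : ℝ) / h T) * ((val T n) ^ 2)⁻¹)
          ∘ (fun w : ℝ => ⌊(T : ℝ) * w⌋₊) := by
        funext w
        simp only [hF, Function.comp_apply]
        rw [hNTval]
      rw [heq]
      exact (measurable_from_top).comp hfloorm
    obtain ⟨Λ, hΛdef⟩ : ∃ Λ : ℝ, Λ = Cmax * MK * ((L : ℝ) * r) := ⟨_, rfl⟩
    obtain ⟨M, hMdef⟩ : ∃ M : ℝ, M = Cmax * MK ^ 2 := ⟨_, rfl⟩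
    have hΛ0 : 0 ≤ Λ := by rw [hΛdef]; positivity
    have hM0 : 0 ≤ M := by rw [hMdef]; positivity
    -- bound on the inverse square factor on (a, b]
    have hq : ∀ w ∈ Set.Ioc a b, ((NT T w) ^ 2)⁻¹ ≤ Cmax := fun w hw =>
      Hinv T hT w (by rw [← ha]; exact hw.1) (hw.2.trans hb1)
    have hq0 : ∀ w : ℝ, 0 ≤ ((NT T w) ^ 2)⁻¹ := fun w => by positivity
    -- bound on D
    have hDbd : ∀ u' v' w', |D u' v' w'| ≤ MK ^ 2 := by
      intro u' v' w'
      rw [hD]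
      split_ifs with hcond
      · rw [abs_mul]
        have h1 := hKbd (w' - u') (by linarith [hcond.2.1])
        have h2 := hKbd (w' - v') (by linarith [hcond.2.2.2])
        calc |K (w' - u')| * |K (w' - v')| ≤ MK * MK :=
            mul_le_mul h1 h2 (abs_nonneg _) hMK0
          _ = MK ^ 2 := by ring
      · simpa using by positivity
    have hbd : ∀ u ∈ Set.Icc γ 1, ∀ w ∈ Set.Ioc a b, |F u w| ≤ M := by
      intro u _ w hw
      simp only [hF]
      rw [abs_mul, abs_of_nonneg (hq0 w)]
      calc |D (u * T / h T) (v * T / h T) ((⌊(T : ℝ) * w⌋₊ : ℝ) / h T)| * (NT T w ^ 2)⁻¹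
          ≤ MK ^ 2 * Cmax :=
            mul_le_mul (hDbd _ _ _) (hq w hw) (hq0 w) (by positivity)
        _ = M := by rw [hMdef]; ring
    -- pointwise oscillation bound
    have hptw : ∀ x y, γ ≤ x → x ≤ y → y ≤ 1 → ∀ w ∈ Set.Ioc a b,
        |F y w - F x w| ≤ Λ * (y - x) + (Set.Ico x y).indicator (fun _ => M) (θ w) := by
      intro x y hgx hxy hy1 w hw
      have hind0 : 0 ≤ (Set.Ico x y).indicator (fun _ => M) (θ w) :=
        Set.indicator_nonneg (fun _ _ => hM0) _
      have hx0 : 0 < x := lt_of_lt_of_le hγ0 hgx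
      have hy0 : 0 < y := lt_of_lt_of_le hx0 hxy
      have hv0 : 0 < v := lt_of_lt_of_le hγ0 hvl
      obtain ⟨aw, haw⟩ : ∃ aw : ℝ, aw = (⌊(T : ℝ) * w⌋₊ : ℝ) / h T := ⟨_, rfl⟩
      -- the membership condition rewrites
      have hcnd : ∀ u : ℝ, 0 < u →
          ((0 ≤ u * T / h T ∧ u * T / h T ≤ aw ∧ 0 ≤ v * T / h T ∧ v * T / h T ≤ aw)
            ↔ (u ≤ θ w ∧ v ≤ θ w)) := by
        intro u hu
        have e : ∀ z : ℝ, 0 < z → (z * T / h T ≤ aw ↔ z ≤ θ w) := by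
          intro z _
          simp only [haw, hθdef]
          rw [div_le_div_iff_of_pos_right hh, le_div_iff₀ hT0]
        constructor
        · rintro ⟨_, h2, _, h4⟩
          exact ⟨(e u hu).1 h2, (e v hv0).1 h4⟩
        · rintro ⟨h1, h2⟩
          exact ⟨by positivity, (e u hu).2 h1, by positivity, (e v hv0).2 h2⟩
      have hDval : ∀ u : ℝ, 0 < u → D (u * T / h T) (v * T / h T) aw
          = if u ≤ θ w ∧ v ≤ θ w then
              K (aw - u * T / h T) * K (aw - v * T / h T) else 0 := by
        intro u hu
        rw [hD]
        exact if_congr (hcnd u hu) rfl rfl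
      obtain ⟨q, hqdef⟩ : ∃ q : ℝ, q = (NT T w ^ 2)⁻¹ := ⟨_, rfl⟩
      have hqq : q ≤ Cmax := hqdef ▸ hq w hw
      have hqq0 : 0 ≤ q := hqdef ▸ hq0 w
      have hFy : F y w = (if y ≤ θ w ∧ v ≤ θ w then
          K (aw - y * T / h T) * K (aw - v * T / h T) else 0) * q := by
        simp only [hF]
        rw [← haw, hDval y hy0, hqdef]
      have hFx : F x w = (if x ≤ θ w ∧ v ≤ θ w then
          K (aw - x * T / h T) * K (aw - v * T / h T) else 0) * q := by
        simp only [hF]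
        rw [← haw, hDval x hx0, hqdef]
      by_cases hvθ : v ≤ θ w
      · by_cases hyθ : y ≤ θ w
        · -- Lipschitz regime
          have hxθ : x ≤ θ w := hxy.trans hyθ
          rw [hFy, hFx, if_pos ⟨hyθ, hvθ⟩, if_pos ⟨hxθ, hvθ⟩]
          have hargx : aw - x * T / h T ∈ Set.Ici (0:ℝ) := by
            rw [Set.mem_Ici, sub_nonneg]
            have := (hcnd x hx0).2 ⟨hxθ, hvθ⟩
            exact this.2.1
          have hargy : aw - y * T / h T ∈ Set.Ici (0:ℝ) := by
            rw [Set.mem_Ici, sub_nonneg]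
            have := (hcnd y hy0).2 ⟨hyθ, hvθ⟩
            exact this.2.1
          have hargv : (0:ℝ) ≤ aw - v * T / h T := by
            rw [sub_nonneg]
            have := (hcnd y hy0).2 ⟨hyθ, hvθ⟩
            exact this.2.2.2
          have hlip := hKLip.dist_le_mul _ hargy _ hargx
          rw [Real.dist_eq, Real.dist_eq] at hlip
          have hdst : |aw - y * T / h T - (aw - x * T / h T)| = r * (y - x) := by
            have : aw - y * T / h T - (aw - x * T / h T) = -(r * (y - x)) := by
              rw [hr]; field_simp; ring
            rw [this, abs_neg, abs_of_nonneg (mul_nonneg hr0.le (sub_nonneg.2 hxy))]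
          rw [hdst] at hlip
          have hKv : |K (aw - v * T / h T) * q| ≤ MK * Cmax := by
            rw [abs_mul, abs_of_nonneg hqq0]
            exact mul_le_mul (hKbd _ hargv) hqq hqq0 hMK0
          have heq : K (aw - y * T / h T) * K (aw - v * T / h T) * q
              - K (aw - x * T / h T) * K (aw - v * T / h T) * q
              = (K (aw - y * T / h T) - K (aw - x * T / h T))
                * (K (aw - v * T / h T) * q) := by ring
          rw [heq, abs_mul]
          have hfin : |K (aw - y * T / h T) - K (aw - x * T / h T)|
              * |K (aw - v * T / h T) * q| ≤ ((L : ℝ) * (r * (y - x))) * (MK * Cmax) :=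
            mul_le_mul hlip hKv (abs_nonneg _)
              (mul_nonneg L.coe_nonneg (mul_nonneg hr0.le (sub_nonneg.2 hxy)))
          refine hfin.trans ?_
          have heq2 : ((L : ℝ) * (r * (y - x))) * (MK * Cmax) = Λ * (y - x) := by
            rw [hΛdef]; ring
          rw [heq2]
          exact le_add_of_nonneg_right hind0
        · push_neg at hyθ
          by_cases hxθ : x ≤ θ w
          · -- jump regime
            have hmem : θ w ∈ Set.Ico x y := ⟨hxθ, hyθ⟩
            rw [Set.indicator_of_mem hmem]
            have hFy0 : F y w = 0 := by
              rw [hFy, if_neg (fun hcc => absurd hcc.1 (not_le.2 hyθ))]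
              ring
            rw [hFy0, zero_sub, abs_neg]
            have hbx := hbd x ⟨hgx, le_trans hxy hy1⟩ w hw
            exact hbx.trans (le_add_of_nonneg_left (mul_nonneg hΛ0 (sub_nonneg.2 hxy)))
          · push_neg at hxθ
            have hFy0 : F y w = 0 := by
              rw [hFy, if_neg (fun hcc => absurd hcc.1 (not_le.2 hyθ))]
              ring
            have hFx0 : F x w = 0 := by
              rw [hFx, if_neg (fun hcc => absurd hcc.1 (not_le.2 hxθ))]
              ring
            rw [hFy0, hFx0]
            simp only [sub_zero, abs_zero]
            exact add_nonneg (mul_nonneg hΛ0 (sub_nonneg.2 hxy)) hind0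
      · have hFy0 : F y w = 0 := by
          rw [hFy, if_neg (fun hcc => absurd hcc.2 hvθ)]
          ring
        have hFx0 : F x w = 0 := by
          rw [hFx, if_neg (fun hcc => absurd hcc.2 hvθ)]
          ring
        rw [hFy0, hFx0]
        simp only [sub_zero, abs_zero]
        exact add_nonneg (mul_nonneg hΛ0 (sub_nonneg.2 hxy)) hind0
    rw [hgF]
    refine (aux_bv γ a b hab hba F θ hθm hFm Λ M hΛ0 hM0 hbd hptw).trans ?_
    refine ENNReal.ofReal_le_ofReal ?_
    have hLnn : (0:ℝ) ≤ (L : ℝ) := L.coe_nonneg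
    have hg1 : 0 ≤ 1 - γ := by linarith
    have : Λ * (1 - γ) + M
        = Cmax * MK * ((L : ℝ) * r * (1 - γ) + MK) := by
      rw [hΛdef, hMdef]; ring
    rw [this]
    have hfac : (L : ℝ) * r * (1 - γ) + MK ≤ (L : ℝ) * (ξ + C₀) * (1 - γ) + MK :=
      add_le_add_left
        (mul_le_mul_of_nonneg_right (mul_le_mul_of_nonneg_left hrle hLnn) hg1) MK
    exact mul_le_mul_of_nonneg_left hfac (mul_nonneg hCmax0 hMK0)
  · -- T = 0
    have hT0 : T = 0 := by omega
    subst hT0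
    have hg0 : ∀ u, gT 0 v s u = 0 := by
      intro u
      rw [hgT]
      norm_num
    rw [eVariationOn]
    refine iSup_le ?_
    rintro ⟨n, ⟨u, hu, hus⟩⟩
    simp [hg0]
end

section
/- (Anscombe's random-index theorem, general form.) Let (Z_n)_{n≥1} be real-valued random variables on a probability space (Ω, F, P) such that Z_n converges in distribution to a real-valued random variable Z as n → ∞, and suppose (Z_n) is uniformly continuous in probability: for every ε > 0 there exist δ > 0 and n₀ ∈ ℕ such that for all n ≥ n₀, P( max_{k : |k − n| < nδ} |Z_k − Z_n| > ε ) < ε. Let (τ_a)_{a>0} be a family of random variables taking values in the positive integers such that τ_a / a → λ in probability as a → ∞, for some constant λ ∈ (0, ∞). Then Z_{τ_a} converges in distribution to Z as a → ∞. -/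
open MeasureTheory

private lemma anscombe_meas_aux {Ω : Type*} [MeasurableSpace Ω] {Z : ℕ → Ω → ℝ}
    (hZ : ∀ n, Measurable (Z n)) {σ : Ω → ℕ} (hσ : Measurable σ) :
    Measurable fun ω => Z (σ ω) ω :=
  (measurable_from_prod_countable_left (f := fun p : Ω × ℕ => Z p.2 p.1) fun n => hZ n).comp
    (measurable_id.prodMk hσ)

private lemma anscombe_int_aux {Ω : Type*} [MeasurableSpace Ω] {μ : Measure Ω}
    [IsProbabilityMeasure μ] {h : Ω → ℝ} (hm : Measurable h) {C : ℝ} (hb : ∀ ω, |h ω| ≤ C) :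
    Integrable h μ :=
  (integrable_const C).mono' hm.aestronglyMeasurable
    (Filter.Eventually.of_forall fun ω => by simpa [Real.norm_eq_abs] using hb ω)

/-- Anscombe's theorem for uniformly continuous bounded test functions. -/
private lemma anscombe_uc {Ω : Type*} [MeasurableSpace Ω] (μ : Measure Ω) [IsProbabilityMeasure μ]
    (Z : ℕ → Ω → ℝ) (Zlim : Ω → ℝ)
    (hZmeas : ∀ n, Measurable (Z n))
    (hZconv : ∀ f : BoundedContinuousFunction ℝ ℝ,
      Filter.Tendsto (fun n : ℕ => ∫ ω, f (Z n ω) ∂μ) Filter.atTop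
        (nhds (∫ ω, f (Zlim ω) ∂μ)))
    (hucip : ∀ ε > (0:ℝ), ∃ δ > (0:ℝ), ∃ n₀ : ℕ, ∀ n : ℕ, n₀ ≤ n →
      μ {ω | ∃ k : ℕ, |(k : ℝ) - (n : ℝ)| < (n : ℝ) * δ ∧ ε < |Z k ω - Z n ω|}
        < ENNReal.ofReal ε)
    (τ : ℝ → Ω → ℕ) (hτmeas : ∀ a, Measurable (τ a))
    (lam : ℝ) (hlam : 0 < lam)
    (hτconv : ∀ ε > (0:ℝ),
      Filter.Tendsto (fun a : ℝ => μ {ω | ε < |((τ a ω : ℝ)) / a - lam|})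
        Filter.atTop (nhds 0))
    (g : BoundedContinuousFunction ℝ ℝ) (hg : UniformContinuous g) :
    Filter.Tendsto (fun a : ℝ => ∫ ω, g (Z (τ a ω) ω) ∂μ) Filter.atTop
      (nhds (∫ ω, g (Zlim ω) ∂μ)) := by
  have hg0 : (0:ℝ) ≤ ‖g‖ := norm_nonneg _
  rw [Metric.tendsto_nhds]
  intro ε hε
  set ε' : ℝ := ε / (3 + 4 * ‖g‖) with hε'def
  have hε' : 0 < ε' := div_pos hε (by linarith)
  obtain ⟨η₀, hη₀, hmod⟩ := Metric.uniformContinuous_iff.mp hg ε' hε'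
  set η : ℝ := min (η₀ / 2) ε' with hηdef
  have hη : 0 < η := lt_min (by linarith) hε'
  have hηη₀ : η < η₀ := lt_of_le_of_lt (min_le_left _ _) (by linarith)
  have hηε' : η ≤ ε' := min_le_right _ _
  obtain ⟨δ, hδ, n₀, hn₀⟩ := hucip η hη
  set n : ℝ → ℕ := fun a => ⌈lam * a⌉₊ with hndef
  have hn_t : Filter.Tendsto n Filter.atTop Filter.atTop :=
    tendsto_nat_ceil_atTop.comp (Filter.Tendsto.const_mul_atTop hlam Filter.tendsto_id)
  set ε₂ : ℝ := lam * δ / 2 with hε₂def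
  have hε₂ : 0 < ε₂ := by positivity
  have E1 : ∀ᶠ a : ℝ in Filter.atTop, n₀ ≤ n a := hn_t.eventually_ge_atTop n₀
  have E2 : ∀ᶠ a : ℝ in Filter.atTop, 2 / δ ≤ (n a : ℝ) := by
    filter_upwards [hn_t.eventually_ge_atTop ⌈2/δ⌉₊] with a ha
    exact le_trans (Nat.le_ceil _) (by exact_mod_cast Nat.cast_le.mpr ha)
  have E3 : ∀ᶠ a : ℝ in Filter.atTop,
      μ {ω | ε₂ < |((τ a ω : ℝ)) / a - lam|} < ENNReal.ofReal ε' :=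
    (hτconv ε₂ hε₂).eventually_lt_const (by simp [ENNReal.ofReal_pos, hε'])
  have E4 : ∀ᶠ a : ℝ in Filter.atTop, (0:ℝ) < a := Filter.eventually_gt_atTop 0
  have E5 : ∀ᶠ a : ℝ in Filter.atTop,
      dist (∫ ω, g (Z (n a) ω) ∂μ) (∫ ω, g (Zlim ω) ∂μ) < ε' :=
    Metric.tendsto_nhds.mp ((hZconv g).comp hn_t) ε' hε'
  filter_upwards [E1, E2, E3, E4, E5] with a hA2 hA3 hA4 hA1 hA5
  set B1 : Set Ω := {ω | ε₂ < |((τ a ω : ℝ)) / a - lam|} with hB1def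
  set B2 : Set Ω := {ω | ∃ k : ℕ,
      |(k : ℝ) - (n a : ℝ)| < (n a : ℝ) * δ ∧ η < |Z k ω - Z (n a) ω|} with hB2def
  have mB1 : MeasurableSet B1 := by
    apply measurableSet_lt measurable_const
    exact (((measurable_from_top.comp (hτmeas a)).div_const a).sub measurable_const).abs
  have mB2 : MeasurableSet B2 := by
    have hEq : B2 = ⋃ k : ℕ, ({ω : Ω | |(k : ℝ) - (n a : ℝ)| < (n a : ℝ) * δ} ∩
        {ω : Ω | η < |Z k ω - Z (n a) ω|}) := by
      ext ω
      simp [hB2def, Set.mem_iUnion, Set.mem_inter_iff, Set.mem_setOf_eq]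
    rw [hEq]
    exact MeasurableSet.iUnion fun k => (MeasurableSet.const _).inter
      (measurableSet_lt measurable_const ((hZmeas k).sub (hZmeas (n a))).abs)
  have hμB2 : μ B2 < ENNReal.ofReal η := hn₀ (n a) hA2
  set B : Set Ω := B1 ∪ B2 with hBdef
  have mB : MeasurableSet B := mB1.union mB2
  have hμB : μ B ≤ ENNReal.ofReal (2 * ε') := by
    refine le_trans (measure_union_le _ _) ?_
    have h1 : μ B1 ≤ ENNReal.ofReal ε' := hA4.le
    have h2 : μ B2 ≤ ENNReal.ofReal ε' :=
      le_trans hμB2.le (ENNReal.ofReal_le_ofReal hηε')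
    calc μ B1 + μ B2 ≤ ENNReal.ofReal ε' + ENNReal.ofReal ε' := add_le_add h1 h2
      _ = ENNReal.ofReal (2 * ε') := by
          rw [← ENNReal.ofReal_add hε'.le hε'.le]; ring_nf
  have hμBr : (μ B).toReal ≤ 2 * ε' := by
    have h := ENNReal.toReal_mono ENNReal.ofReal_ne_top hμB
    rwa [ENNReal.toReal_ofReal (by linarith)] at h
  -- pointwise estimate off the bad set
  have hpt : ∀ ω, ω ∉ B → |g (Z (τ a ω) ω) - g (Z (n a) ω)| ≤ ε' := by
    intro ω hω
    have hω1 : ω ∉ B1 := fun h => hω (Set.mem_union_left _ h)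
    have hω2 : ω ∉ B2 := fun h => hω (Set.mem_union_right _ h)
    have h1 : |((τ a ω : ℝ)) / a - lam| ≤ ε₂ := not_lt.mp hω1
    have ha0 : a ≠ 0 := ne_of_gt hA1
    have h2 : |((τ a ω : ℝ)) - lam * a| ≤ a * ε₂ := by
      have hEq : ((τ a ω : ℝ)) - lam * a = (((τ a ω : ℝ)) / a - lam) * a := by
        rw [sub_mul, div_mul_cancel₀ _ ha0]
      rw [hEq, abs_mul, abs_of_pos hA1, mul_comm a ε₂]
      exact mul_le_mul_of_nonneg_right h1 hA1.le
    have hc1 : lam * a ≤ (n a : ℝ) := Nat.le_ceil _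
    have hc2 : (n a : ℝ) < lam * a + 1 := Nat.ceil_lt_add_one (by positivity)
    have hδn : 2 ≤ (n a : ℝ) * δ := by
      rw [div_le_iff₀ hδ] at hA3
      linarith
    have hx := abs_le.mp h2
    have h3 : a * ε₂ * 2 ≤ (n a : ℝ) * δ := by
      have hEq : a * ε₂ * 2 = lam * a * δ := by rw [hε₂def]; ring
      rw [hEq]
      exact mul_le_mul_of_nonneg_right hc1 hδ.le
    have hwin : |((τ a ω : ℝ)) - (n a : ℝ)| < (n a : ℝ) * δ := by
      rw [abs_lt]
      constructor <;> linarith [hx.1, hx.2]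
    have hZsmall : |Z (τ a ω) ω - Z (n a) ω| ≤ η := by
      by_contra hcon
      push_neg at hcon
      exact hω2 ⟨τ a ω, hwin, hcon⟩
    have hd : dist (Z (τ a ω) ω) (Z (n a) ω) < η₀ := by
      rw [Real.dist_eq]; linarith
    have := hmod hd
    rw [Real.dist_eq] at this
    linarith
  -- integral comparison
  have hXmeas : Measurable fun ω => Z (τ a ω) ω := anscombe_meas_aux hZmeas (hτmeas a)
  have hu_int : Integrable (fun ω => g (Z (τ a ω) ω)) μ :=
    anscombe_int_aux (g.continuous.measurable.comp hXmeas)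
      (fun ω => by simpa [Real.norm_eq_abs] using g.norm_coe_le_norm (Z (τ a ω) ω))
  have hv_int : Integrable (fun ω => g (Z (n a) ω)) μ :=
    anscombe_int_aux (g.continuous.measurable.comp (hZmeas (n a)))
      (fun ω => by simpa [Real.norm_eq_abs] using g.norm_coe_le_norm (Z (n a) ω))
  have hw_int : Integrable (fun ω => |g (Z (τ a ω) ω) - g (Z (n a) ω)|) μ :=
    (hu_int.sub hv_int).abs
  have hh_int : Integrable (fun ω => ε' + B.indicator (fun _ => 2 * ‖g‖) ω) μ :=
    (integrable_const _).add ((integrable_const _).indicator mB)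
  have hle : ∀ ω, |g (Z (τ a ω) ω) - g (Z (n a) ω)|
      ≤ ε' + B.indicator (fun _ => 2 * ‖g‖) ω := by
    intro ω
    by_cases hω : ω ∈ B
    · rw [Set.indicator_of_mem hω]
      have h1 : |g (Z (τ a ω) ω)| ≤ ‖g‖ := by
        simpa [Real.norm_eq_abs] using g.norm_coe_le_norm (Z (τ a ω) ω)
      have h2 : |g (Z (n a) ω)| ≤ ‖g‖ := by
        simpa [Real.norm_eq_abs] using g.norm_coe_le_norm (Z (n a) ω)
      have h3 : |g (Z (τ a ω) ω) - g (Z (n a) ω)| ≤ |g (Z (τ a ω) ω)| + |g (Z (n a) ω)| := by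
        have := abs_add_le (g (Z (τ a ω) ω)) (-(g (Z (n a) ω)))
        simpa [sub_eq_add_neg] using this
      linarith
    · rw [Set.indicator_of_notMem hω]
      simpa using hpt ω hω
  have hint1 : ∫ ω, |g (Z (τ a ω) ω) - g (Z (n a) ω)| ∂μ ≤ ε' + 4 * ‖g‖ * ε' := by
    have step : ∫ ω, |g (Z (τ a ω) ω) - g (Z (n a) ω)| ∂μ
        ≤ ∫ ω, (ε' + B.indicator (fun _ => 2 * ‖g‖) ω) ∂μ :=
      integral_mono hw_int hh_int hle
    have hcomp : ∫ ω, (ε' + B.indicator (fun _ => 2 * ‖g‖) ω) ∂μ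
        = ε' + (μ B).toReal * (2 * ‖g‖) := by
      rw [integral_add (integrable_const _) ((integrable_const _).indicator mB),
        integral_const, integral_indicator_const _ mB]
      simp [Measure.real]
    rw [hcomp] at step
    have hmul : (μ B).toReal * (2 * ‖g‖) ≤ (2 * ε') * (2 * ‖g‖) :=
      mul_le_mul_of_nonneg_right hμBr (by positivity)
    nlinarith
  have hdiff : |(∫ ω, g (Z (τ a ω) ω) ∂μ) - ∫ ω, g (Z (n a) ω) ∂μ| ≤ ε' + 4 * ‖g‖ * ε' := by
    rw [← integral_sub hu_int hv_int]
    have h := norm_integral_le_integral_norm (μ := μ)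
      (fun ω => g (Z (τ a ω) ω) - g (Z (n a) ω))
    simp only [Real.norm_eq_abs] at h
    exact le_trans h hint1
  rw [Real.dist_eq] at hA5 ⊢
  have tri : |(∫ ω, g (Z (τ a ω) ω) ∂μ) - ∫ ω, g (Zlim ω) ∂μ|
      ≤ |(∫ ω, g (Z (τ a ω) ω) ∂μ) - ∫ ω, g (Z (n a) ω) ∂μ|
        + |(∫ ω, g (Z (n a) ω) ∂μ) - ∫ ω, g (Zlim ω) ∂μ| := abs_sub_le _ _ _
  have hfin : ε' * (3 + 4 * ‖g‖) = ε := div_mul_cancel₀ _ (by positivity)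
  nlinarith

/-- Anscombe's random-index theorem (general form): if `Z_n → Z` in distribution, `(Z_n)` is
uniformly continuous in probability, and the positive-integer-valued random indices `τ_a`
satisfy `τ_a/a → λ` in probability as `a → ∞` for a constant `λ ∈ (0,∞)`, then
`Z_{τ_a} → Z` in distribution as `a → ∞`. Convergence in distribution is expressed via
integrals of bounded continuous functions. -/
theorem stmt_8
    {Ω : Type*} [MeasurableSpace Ω] (μ : Measure Ω) [IsProbabilityMeasure μ]
    (Z : ℕ → Ω → ℝ) (Zlim : Ω → ℝ)
    (hZmeas : ∀ n, Measurable (Z n)) (hZlimmeas : Measurable Zlim)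
    (hZconv : ∀ f : BoundedContinuousFunction ℝ ℝ,
      Filter.Tendsto (fun n : ℕ => ∫ ω, f (Z n ω) ∂μ) Filter.atTop
        (nhds (∫ ω, f (Zlim ω) ∂μ)))
    (hucip : ∀ ε > (0:ℝ), ∃ δ > (0:ℝ), ∃ n₀ : ℕ, ∀ n : ℕ, n₀ ≤ n →
      μ {ω | ∃ k : ℕ, |(k : ℝ) - (n : ℝ)| < (n : ℝ) * δ ∧ ε < |Z k ω - Z n ω|}
        < ENNReal.ofReal ε)
    (τ : ℝ → Ω → ℕ) (hτmeas : ∀ a, Measurable (τ a))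
    (hτpos : ∀ a > (0:ℝ), ∀ ω, 1 ≤ τ a ω)
    (lam : ℝ) (hlam : 0 < lam)
    (hτconv : ∀ ε > (0:ℝ),
      Filter.Tendsto (fun a : ℝ => μ {ω | ε < |((τ a ω : ℝ)) / a - lam|})
        Filter.atTop (nhds 0)) :
    ∀ f : BoundedContinuousFunction ℝ ℝ,
      Filter.Tendsto (fun a : ℝ => ∫ ω, f (Z (τ a ω) ω) ∂μ) Filter.atTop
        (nhds (∫ ω, f (Zlim ω) ∂μ)) := by
  intro f
  have hf0 : (0:ℝ) ≤ ‖f‖ := norm_nonneg _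
  rw [Metric.tendsto_nhds]
  intro ε hε
  set ε₁ : ℝ := ε / (2 + 3 * ‖f‖) with hε₁def
  have hε₁ : 0 < ε₁ := div_pos hε (by linarith)
  -- choose a cutoff level M
  obtain ⟨M, hM⟩ : ∃ M : ℕ, μ {ω | (M:ℝ) < |Zlim ω|} < ENNReal.ofReal ε₁ := by
    have hmeas : ∀ M : ℕ, MeasurableSet {ω | (M:ℝ) < |Zlim ω|} := fun M =>
      measurableSet_lt measurable_const hZlimmeas.abs
    have hmono : Antitone (fun M : ℕ => {ω | (M:ℝ) < |Zlim ω|}) := by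
      intro i j hij ω hω
      simp only [Set.mem_setOf_eq] at hω ⊢
      exact lt_of_le_of_lt (by exact_mod_cast hij) hω
    have hempty : ⋂ M : ℕ, {ω | (M:ℝ) < |Zlim ω|} = ∅ := by
      apply Set.eq_empty_iff_forall_notMem.mpr
      intro ω hω
      rw [Set.mem_iInter] at hω
      have h2 := hω ⌈|Zlim ω|⌉₊
      rw [Set.mem_setOf_eq] at h2
      exact absurd h2 (not_lt.mpr (Nat.le_ceil _))
    have htend := tendsto_measure_iInter_atTop
      (fun M => (hmeas M).nullMeasurableSet) hmono ⟨0, measure_ne_top μ _⟩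
    rw [hempty] at htend
    simp only [measure_empty] at htend
    exact (htend.eventually_lt_const
      (show (0:ENNReal) < ENNReal.ofReal ε₁ by simp [ENNReal.ofReal_pos, hε₁])).exists
  -- the cutoff function
  set U : Set ℝ := (Set.Icc (-(M:ℝ) - 1) ((M:ℝ) + 1))ᶜ with hUdef
  have hUne : U.Nonempty := by
    refine ⟨(M:ℝ) + 2, ?_⟩
    rw [hUdef]
    simp only [Set.mem_compl_iff, Set.mem_Icc, not_and_or, not_le]
    right
    linarith
  set χ : ℝ → ℝ := fun x => min (Metric.infDist x U) 1 with hχdef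
  have hχuc : UniformContinuous χ :=
    ((Metric.lipschitz_infDist_pt U).min_const 1).uniformContinuous
  have hχcont : Continuous χ := hχuc.continuous
  have hχ0 : ∀ x, 0 ≤ χ x := fun x => le_min Metric.infDist_nonneg zero_le_one
  have hχ1 : ∀ x, χ x ≤ 1 := fun x => min_le_right _ _
  have hχeq1 : ∀ x : ℝ, |x| ≤ (M:ℝ) → χ x = 1 := by
    intro x hx
    have h1 : (1:ℝ) ≤ Metric.infDist x U := by
      by_contra hcon
      push_neg at hcon
      obtain ⟨y, hyU, hy⟩ := (Metric.infDist_lt_iff hUne).mp hcon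
      rw [hUdef] at hyU
      simp only [Set.mem_compl_iff, Set.mem_Icc, not_and_or, not_le] at hyU
      rw [Real.dist_eq] at hy
      rcases hyU with h | h
      · have := abs_le.mp hx
        have := abs_lt.mp hy
        linarith [this.1, this.2]
      · have := abs_le.mp hx
        have := abs_lt.mp hy
        linarith [this.1, this.2]
    rw [hχdef]
    simp [min_eq_right h1]
  have hχ0out : ∀ x : ℝ, x ∉ Set.Icc (-(M:ℝ) - 1) ((M:ℝ) + 1) → χ x = 0 := by
    intro x hx
    have hxU : x ∈ U := by rw [hUdef]; exact hx
    have h0 : Metric.infDist x U = 0 := Metric.infDist_zero_of_mem hxU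
    rw [hχdef]
    simp [h0]
  -- bounded continuous test functions
  set g₁ : BoundedContinuousFunction ℝ ℝ :=
    BoundedContinuousFunction.ofNormedAddCommGroup (fun x => f x * χ x)
      (f.continuous.mul hχcont) ‖f‖
      (fun x => by
        show ‖f x * χ x‖ ≤ ‖f‖
        rw [Real.norm_eq_abs, abs_mul]
        calc |f x| * |χ x| ≤ ‖f‖ * 1 := by
              apply mul_le_mul _ _ (abs_nonneg _) hf0
              · simpa [Real.norm_eq_abs] using f.norm_coe_le_norm x
              · rw [abs_of_nonneg (hχ0 x)]; exact hχ1 x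
          _ = ‖f‖ := mul_one _) with hg₁def
  set g₂ : BoundedContinuousFunction ℝ ℝ :=
    BoundedContinuousFunction.ofNormedAddCommGroup (fun x => 1 - χ x)
      (continuous_const.sub hχcont) 1
      (fun x => by
        have h01 : (0:ℝ) ≤ 1 - χ x := by linarith [hχ1 x]
        show ‖1 - χ x‖ ≤ 1
        rw [Real.norm_eq_abs, abs_of_nonneg h01]
        linarith [hχ0 x]) with hg₂def
  have hg₁coe : ∀ x, g₁ x = f x * χ x := fun x => rfl
  have hg₂coe : ∀ x, g₂ x = 1 - χ x := fun x => rfl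
  -- g₁ is uniformly continuous (compact support), g₂ is uniformly continuous
  have hg₁uc : UniformContinuous g₁ := by
    have hcs : HasCompactSupport (fun x : ℝ => f x * χ x) :=
      HasCompactSupport.intro isCompact_Icc
        (fun x hx => by rw [hχ0out x hx, mul_zero])
    exact hcs.uniformContinuous_of_continuous (f.continuous.mul hχcont)
  have hg₂uc : UniformContinuous g₂ := uniformContinuous_const.sub hχuc
  -- apply the uniformly continuous case
  have key₁ := anscombe_uc μ Z Zlim hZmeas hZconv hucip τ hτmeas lam hlam hτconv g₁ hg₁uc
  have key₂ := anscombe_uc μ Z Zlim hZmeas hZconv hucip τ hτmeas lam hlam hτconv g₂ hg₂uc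
  -- bound the tail term for the limit variable
  set q : ℝ := ∫ ω, g₂ (Zlim ω) ∂μ with hqdef
  have hSM : MeasurableSet {ω | (M:ℝ) < |Zlim ω|} :=
    measurableSet_lt measurable_const hZlimmeas.abs
  have hg₂Zint : Integrable (fun ω => g₂ (Zlim ω)) μ :=
    anscombe_int_aux (g₂.continuous.measurable.comp hZlimmeas)
      (fun ω => by simpa [Real.norm_eq_abs] using g₂.norm_coe_le_norm (Zlim ω))
  have hq0 : 0 ≤ q := by
    refine integral_nonneg fun ω => ?_
    simp only [Pi.zero_apply]
    show (0:ℝ) ≤ g₂ (Zlim ω)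
    rw [hg₂coe]
    linarith [hχ1 (Zlim ω)]
  have hq1 : q < ε₁ := by
    have hle : ∀ ω, g₂ (Zlim ω) ≤
        Set.indicator {ω | (M:ℝ) < |Zlim ω|} (fun _ => (1:ℝ)) ω := by
      intro ω
      by_cases hω : ω ∈ {ω | (M:ℝ) < |Zlim ω|}
      · rw [Set.indicator_of_mem hω, hg₂coe]
        linarith [hχ0 (Zlim ω)]
      · rw [Set.indicator_of_notMem hω, hg₂coe, hχeq1 (Zlim ω)
          (not_lt.mp (by simpa using hω))]
        norm_num
    have hstep : q ≤ (μ {ω | (M:ℝ) < |Zlim ω|}).toReal := by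
      calc q ≤ ∫ ω, Set.indicator {ω | (M:ℝ) < |Zlim ω|} (fun _ => (1:ℝ)) ω ∂μ :=
          integral_mono hg₂Zint ((integrable_const (1:ℝ)).indicator hSM) hle
        _ = (μ {ω | (M:ℝ) < |Zlim ω|}).toReal := by
            rw [integral_indicator_const _ hSM]; simp [Measure.real]
    exact lt_of_le_of_lt hstep (ENNReal.toReal_lt_of_lt_ofReal hM)
  -- eventual estimates
  have Ea : ∀ᶠ a : ℝ in Filter.atTop,
      dist (∫ ω, g₁ (Z (τ a ω) ω) ∂μ) (∫ ω, g₁ (Zlim ω) ∂μ) < ε₁ :=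
    Metric.tendsto_nhds.mp key₁ ε₁ hε₁
  have Eb : ∀ᶠ a : ℝ in Filter.atTop, (∫ ω, g₂ (Z (τ a ω) ω) ∂μ) < q + ε₁ :=
    key₂.eventually_lt_const (by linarith)
  filter_upwards [Ea, Eb] with a ha hb
  -- decompositions
  have hXmeas : Measurable fun ω => Z (τ a ω) ω := anscombe_meas_aux hZmeas (hτmeas a)
  have hfXint : Integrable (fun ω => f (Z (τ a ω) ω)) μ :=
    anscombe_int_aux (f.continuous.measurable.comp hXmeas)
      (fun ω => by simpa [Real.norm_eq_abs] using f.norm_coe_le_norm (Z (τ a ω) ω))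
  have hfZint : Integrable (fun ω => f (Zlim ω)) μ :=
    anscombe_int_aux (f.continuous.measurable.comp hZlimmeas)
      (fun ω => by simpa [Real.norm_eq_abs] using f.norm_coe_le_norm (Zlim ω))
  have hg₁Xint : Integrable (fun ω => g₁ (Z (τ a ω) ω)) μ :=
    anscombe_int_aux (g₁.continuous.measurable.comp hXmeas)
      (fun ω => by simpa [Real.norm_eq_abs] using g₁.norm_coe_le_norm (Z (τ a ω) ω))
  have hg₁Zint : Integrable (fun ω => g₁ (Zlim ω)) μ :=
    anscombe_int_aux (g₁.continuous.measurable.comp hZlimmeas)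
      (fun ω => by simpa [Real.norm_eq_abs] using g₁.norm_coe_le_norm (Zlim ω))
  have hg₂Xint : Integrable (fun ω => g₂ (Z (τ a ω) ω)) μ :=
    anscombe_int_aux (g₂.continuous.measurable.comp hXmeas)
      (fun ω => by simpa [Real.norm_eq_abs] using g₂.norm_coe_le_norm (Z (τ a ω) ω))
  -- tail pieces
  have hpXint : Integrable (fun ω => f (Z (τ a ω) ω) * g₂ (Z (τ a ω) ω)) μ :=
    anscombe_int_aux ((f.continuous.measurable.comp hXmeas).mul
      (g₂.continuous.measurable.comp hXmeas))
      (fun ω => by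
        rw [abs_mul, hg₂coe]
        calc |f (Z (τ a ω) ω)| * |1 - χ (Z (τ a ω) ω)| ≤ ‖f‖ * 1 := by
              apply mul_le_mul _ _ (abs_nonneg _) hf0
              · simpa [Real.norm_eq_abs] using f.norm_coe_le_norm (Z (τ a ω) ω)
              · rw [abs_of_nonneg (by linarith [hχ1 (Z (τ a ω) ω)])]
                linarith [hχ0 (Z (τ a ω) ω)]
          _ = ‖f‖ := mul_one _)
  have hpZint : Integrable (fun ω => f (Zlim ω) * g₂ (Zlim ω)) μ :=
    anscombe_int_aux ((f.continuous.measurable.comp hZlimmeas).mul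
      (g₂.continuous.measurable.comp hZlimmeas))
      (fun ω => by
        rw [abs_mul, hg₂coe]
        calc |f (Zlim ω)| * |1 - χ (Zlim ω)| ≤ ‖f‖ * 1 := by
              apply mul_le_mul _ _ (abs_nonneg _) hf0
              · simpa [Real.norm_eq_abs] using f.norm_coe_le_norm (Zlim ω)
              · rw [abs_of_nonneg (by linarith [hχ1 (Zlim ω)])]
                linarith [hχ0 (Zlim ω)]
          _ = ‖f‖ := mul_one _)
  -- splitting identities
  have hsplitX : ∫ ω, f (Z (τ a ω) ω) ∂μ
      = (∫ ω, g₁ (Z (τ a ω) ω) ∂μ) + ∫ ω, f (Z (τ a ω) ω) * g₂ (Z (τ a ω) ω) ∂μ := by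
    rw [← integral_add hg₁Xint hpXint]
    congr 1
    ext ω
    rw [hg₁coe, hg₂coe]
    ring
  have hsplitZ : ∫ ω, f (Zlim ω) ∂μ
      = (∫ ω, g₁ (Zlim ω) ∂μ) + ∫ ω, f (Zlim ω) * g₂ (Zlim ω) ∂μ := by
    rw [← integral_add hg₁Zint hpZint]
    congr 1
    ext ω
    rw [hg₁coe, hg₂coe]
    ring
  -- tail bounds
  have htailX : |∫ ω, f (Z (τ a ω) ω) * g₂ (Z (τ a ω) ω) ∂μ|
      ≤ ‖f‖ * ∫ ω, g₂ (Z (τ a ω) ω) ∂μ := by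
    have h := norm_integral_le_integral_norm (μ := μ)
      (fun ω => f (Z (τ a ω) ω) * g₂ (Z (τ a ω) ω))
    simp only [Real.norm_eq_abs] at h
    refine le_trans h ?_
    rw [← integral_const_mul]
    apply integral_mono hpXint.abs (hg₂Xint.const_mul ‖f‖)
    intro ω
    show |f (Z (τ a ω) ω) * g₂ (Z (τ a ω) ω)| ≤ ‖f‖ * g₂ (Z (τ a ω) ω)
    rw [abs_mul, hg₂coe, abs_of_nonneg
      (show (0:ℝ) ≤ 1 - χ (Z (τ a ω) ω) by linarith [hχ1 (Z (τ a ω) ω)])]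
    apply mul_le_mul_of_nonneg_right _ (by linarith [hχ1 (Z (τ a ω) ω)])
    simpa [Real.norm_eq_abs] using f.norm_coe_le_norm (Z (τ a ω) ω)
  have hg₂abs : ∀ ω, |g₂ (Z (τ a ω) ω)| = g₂ (Z (τ a ω) ω) := by
    intro ω
    rw [hg₂coe, abs_of_nonneg (by linarith [hχ1 (Z (τ a ω) ω)])]
  have htailZ : |∫ ω, f (Zlim ω) * g₂ (Zlim ω) ∂μ| ≤ ‖f‖ * q := by
    have h := norm_integral_le_integral_norm (μ := μ)
      (fun ω => f (Zlim ω) * g₂ (Zlim ω))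
    simp only [Real.norm_eq_abs] at h
    refine le_trans h ?_
    rw [hqdef, ← integral_const_mul]
    apply integral_mono hpZint.abs (hg₂Zint.const_mul ‖f‖)
    intro ω
    show |f (Zlim ω) * g₂ (Zlim ω)| ≤ ‖f‖ * g₂ (Zlim ω)
    rw [abs_mul, hg₂coe, abs_of_nonneg
      (show (0:ℝ) ≤ 1 - χ (Zlim ω) by linarith [hχ1 (Zlim ω)])]
    apply mul_le_mul_of_nonneg_right _ (by linarith [hχ1 (Zlim ω)])
    simpa [Real.norm_eq_abs] using f.norm_coe_le_norm (Zlim ω)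
  have hg₂Xnn : 0 ≤ ∫ ω, g₂ (Z (τ a ω) ω) ∂μ := by
    refine integral_nonneg fun ω => ?_
    simp only [Pi.zero_apply]
    show (0:ℝ) ≤ g₂ (Z (τ a ω) ω)
    rw [hg₂coe]
    linarith [hχ1 (Z (τ a ω) ω)]
  -- final assembly
  rw [Real.dist_eq] at ha ⊢
  rw [hsplitX, hsplitZ]
  have htri : |((∫ ω, g₁ (Z (τ a ω) ω) ∂μ) + ∫ ω, f (Z (τ a ω) ω) * g₂ (Z (τ a ω) ω) ∂μ)
      - ((∫ ω, g₁ (Zlim ω) ∂μ) + ∫ ω, f (Zlim ω) * g₂ (Zlim ω) ∂μ)|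
      ≤ |(∫ ω, g₁ (Z (τ a ω) ω) ∂μ) - ∫ ω, g₁ (Zlim ω) ∂μ|
        + |∫ ω, f (Z (τ a ω) ω) * g₂ (Z (τ a ω) ω) ∂μ|
        + |∫ ω, f (Zlim ω) * g₂ (Zlim ω) ∂μ| := by
    have h1 : |((∫ ω, g₁ (Z (τ a ω) ω) ∂μ) + ∫ ω, f (Z (τ a ω) ω) * g₂ (Z (τ a ω) ω) ∂μ)
        - ((∫ ω, g₁ (Zlim ω) ∂μ) + ∫ ω, f (Zlim ω) * g₂ (Zlim ω) ∂μ)|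
        = |((∫ ω, g₁ (Z (τ a ω) ω) ∂μ) - ∫ ω, g₁ (Zlim ω) ∂μ)
          + ((∫ ω, f (Z (τ a ω) ω) * g₂ (Z (τ a ω) ω) ∂μ)
            + -(∫ ω, f (Zlim ω) * g₂ (Zlim ω) ∂μ))| := by
      congr 1
      ring
    rw [h1]
    refine le_trans (abs_add_le _ _) ?_
    have h2 := abs_add_le (∫ ω, f (Z (τ a ω) ω) * g₂ (Z (τ a ω) ω) ∂μ)
      (-(∫ ω, f (Zlim ω) * g₂ (Zlim ω) ∂μ))
    rw [abs_neg] at h2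
    linarith
  have hb' : ‖f‖ * ∫ ω, g₂ (Z (τ a ω) ω) ∂μ ≤ ‖f‖ * (q + ε₁) :=
    mul_le_mul_of_nonneg_left hb.le hf0
  have hb'' : ‖f‖ * (q + ε₁) ≤ ‖f‖ * (2 * ε₁) :=
    mul_le_mul_of_nonneg_left (by linarith) hf0
  have hq' : ‖f‖ * q ≤ ‖f‖ * ε₁ := mul_le_mul_of_nonneg_left hq1.le hf0
  have hexp1 : ‖f‖ * (2 * ε₁) = 2 * (‖f‖ * ε₁) := by ring
  have hfin : ε₁ * (2 + 3 * ‖f‖) = ε := div_mul_cancel₀ _ (by positivity)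
  have hfin' : ε = 2 * ε₁ + 3 * (‖f‖ * ε₁) := by rw [← hfin]; ring
  linarith [htailX, htailZ, htri, ha]
end
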